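/- Let $L(x) = A_0 + \sum_{j=1}^g A_j x_j$ be a linear pencil with $A_j \in \mathbb{C}^{d \times e}$, $d \geq e$, and suppose there exist $D \in \mathbb{C}^{e \times d}$ and an invertible $R \in \mathbb{C}^{e \times e}$ with $\mathrm{Re}(D A_0) = R^* R$ and $\mathrm{Re}(D A_j) = 0$ for $1 \leq j \leq g$. Then there exists $\varepsilon > 0$ such that for every $n$ and every tuple $X$ of Hermitian $n \times n$ matrices, $L(X)^* L(X) \succeq \varepsilon I$, where $L(X) = A_0 \otimes I_n + \sum_j A_j \otimes X_j$. In particular one may take $\varepsilon = \|R^{-1}\|^{-4} \|D\|^{-2}$. -/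

import Mathlib

open Matrix
open scoped ComplexOrder Kronecker Matrix.Norms.L2Operator

section Aux
variable {a b n : ℕ}

lemma kronT {l m p q : ℕ} (M : Matrix (Fin l) (Fin m) ℂ) (N : Matrix (Fin p) (Fin q) ℂ) :
    (M ⊗ₖ N)ᴴ = Mᴴ ⊗ₖ Nᴴ := by
  ext ⟨i, k⟩ ⟨j, l'⟩
  simp [conjTranspose_apply, mul_comm]

lemma kron_one_mulVec (M : Matrix (Fin a) (Fin b) ℂ) (w : Fin b × Fin n → ℂ) (i : Fin a)
    (k : Fin n) :
    ((M ⊗ₖ (1 : Matrix (Fin n) (Fin n) ℂ)) *ᵥ w) (i, k) = (M *ᵥ fun j => w (j, k)) i := by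
  simp [mulVec, dotProduct, Fintype.sum_prod_type, one_apply, mul_ite, ite_mul,
    Finset.sum_ite_eq, Finset.sum_ite_eq']

lemma enorm_sq {ι : Type*} [Fintype ι] (x : EuclideanSpace ℂ ι) :
    ‖x‖ ^ 2 = ∑ i, ‖x i‖ ^ 2 := by
  rw [EuclideanSpace.norm_eq, Real.sq_sqrt (Finset.sum_nonneg fun i _ => sq_nonneg _)]

lemma kron_one_mulVec_norm_le (M : Matrix (Fin a) (Fin b) ℂ) (w : Fin b × Fin n → ℂ) :
    ‖(EuclideanSpace.equiv (Fin a × Fin n) ℂ).symm ((M ⊗ₖ (1 : Matrix (Fin n) (Fin n) ℂ)) *ᵥ w)‖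
      ≤ ‖M‖ * ‖(EuclideanSpace.equiv (Fin b × Fin n) ℂ).symm w‖ := by
  have h2 : ‖(EuclideanSpace.equiv (Fin a × Fin n) ℂ).symm
        ((M ⊗ₖ (1 : Matrix (Fin n) (Fin n) ℂ)) *ᵥ w)‖ ^ 2
      ≤ (‖M‖ * ‖(EuclideanSpace.equiv (Fin b × Fin n) ℂ).symm w‖) ^ 2 := by
    rw [enorm_sq, mul_pow, enorm_sq]
    calc ∑ p : Fin a × Fin n, ‖((M ⊗ₖ (1 : Matrix (Fin n) (Fin n) ℂ)) *ᵥ w) p‖ ^ 2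
        = ∑ k : Fin n, ∑ i : Fin a, ‖(M *ᵥ fun j => w (j, k)) i‖ ^ 2 := by
          rw [Fintype.sum_prod_type, Finset.sum_comm]
          simp [kron_one_mulVec]
      _ ≤ ∑ k : Fin n, ‖M‖ ^ 2 * ∑ j : Fin b, ‖w (j, k)‖ ^ 2 := by
          refine Finset.sum_le_sum fun k _ => ?_
          have := M.l2_opNorm_mulVec ((EuclideanSpace.equiv (Fin b) ℂ).symm fun j => w (j, k))
          have h3 := mul_self_le_mul_self (norm_nonneg _) this
          rw [← pow_two, ← pow_two] at h3
          have hL : ‖(EuclideanSpace.equiv (Fin a) ℂ).symm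
              (M *ᵥ fun j => w (j, k))‖ ^ 2 = ∑ i, ‖(M *ᵥ fun j => w (j, k)) i‖ ^ 2 := enorm_sq _
          have hRr : ‖(EuclideanSpace.equiv (Fin b) ℂ).symm fun j => w (j, k)‖ ^ 2
              = ∑ j, ‖w (j, k)‖ ^ 2 := enorm_sq _
          calc ∑ i, ‖(M *ᵥ fun j => w (j, k)) i‖ ^ 2 ≤ (‖M‖ *
              ‖(EuclideanSpace.equiv (Fin b) ℂ).symm fun j => w (j, k)‖) ^ 2 := by
                rw [← hL]; exact h3
            _ = ‖M‖ ^ 2 * ∑ j, ‖w (j, k)‖ ^ 2 := by rw [mul_pow, hRr]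
      _ = ‖M‖ ^ 2 * ∑ p : Fin b × Fin n, ‖w p‖ ^ 2 := by
          rw [← Finset.mul_sum, Fintype.sum_prod_type, Finset.sum_comm]
  have := Real.sqrt_le_sqrt h2
  rwa [Real.sqrt_sq (norm_nonneg _), Real.sqrt_sq (by positivity)] at this

lemma star_dot {ι : Type*} [Fintype ι] (w : ι → ℂ) :
    star w ⬝ᵥ w = ((∑ i, ‖w i‖ ^ 2 : ℝ) : ℂ) := by
  rw [dotProduct, Complex.ofReal_sum]
  refine Finset.sum_congr rfl fun i _ => ?_
  rw [Pi.star_apply, Complex.star_def, mul_comm, Complex.mul_conj,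
    Complex.sq_norm]

lemma star_dot_inner {ι : Type*} [Fintype ι] (v u : ι → ℂ) :
    star v ⬝ᵥ u =
      inner ℂ ((EuclideanSpace.equiv ι ℂ).symm v) ((EuclideanSpace.equiv ι ℂ).symm u) := by
  rw [dotProduct_comm]; rfl

lemma abs_star_dot_le {ι : Type*} [Fintype ι] (v u : ι → ℂ) :
    ‖star v ⬝ᵥ u‖ ≤
      ‖(EuclideanSpace.equiv ι ℂ).symm v‖ * ‖(EuclideanSpace.equiv ι ℂ).symm u‖ := by
  rw [star_dot_inner]
  exact norm_inner_le_norm (𝕜 := ℂ) _ _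

end Aux

theorem stmt_12 (d e g : ℕ) (hde : e ≤ d) (he : 0 < e)
    (A0 : Matrix (Fin d) (Fin e) ℂ) (A : Fin g → Matrix (Fin d) (Fin e) ℂ)
    (D : Matrix (Fin e) (Fin d) ℂ) (R : Matrix (Fin e) (Fin e) ℂ) (hR : IsUnit R)
    (hRe0 : (1 / 2 : ℂ) • (D * A0 + (D * A0)ᴴ) = Rᴴ * R)
    (hRej : ∀ j, (1 / 2 : ℂ) • (D * A j + (D * A j)ᴴ) = 0) :
    ∃ ε : ℝ, ε = (‖R⁻¹‖ ^ 4)⁻¹ * (‖D‖ ^ 2)⁻¹ ∧ 0 < ε ∧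
      ∀ (n : ℕ) (X : Fin g → Matrix (Fin n) (Fin n) ℂ), (∀ j, (X j).IsHermitian) →
        ((A0 ⊗ₖ (1 : Matrix (Fin n) (Fin n) ℂ) + ∑ j, A j ⊗ₖ X j)ᴴ *
            (A0 ⊗ₖ (1 : Matrix (Fin n) (Fin n) ℂ) + ∑ j, A j ⊗ₖ X j) -
          (ε : ℂ) • 1).PosSemidef := by
  haveI : Nonempty (Fin e) := ⟨⟨0, he⟩⟩
  have hdet : IsUnit R.det := (isUnit_iff_isUnit_det R).mp hR
  have hinv : R⁻¹ * R = 1 := nonsing_inv_mul R hdet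
  -- positivity of the norms
  have hRinv_pos : 0 < ‖R⁻¹‖ := by
    rw [norm_pos_iff]
    intro h
    rw [h, zero_mul] at hinv
    have := congrFun (congrFun hinv ⟨0, he⟩) ⟨0, he⟩
    simp [one_apply] at this
  have h2A0 : D * A0 + (D * A0)ᴴ = (2 : ℂ) • (Rᴴ * R) := by
    have := congrArg (fun M => (2 : ℂ) • M) hRe0
    simpa [smul_smul] using this
  have h2Aj : ∀ j, D * A j + (D * A j)ᴴ = 0 := by
    intro j
    have := congrArg (fun M => (2 : ℂ) • M) (hRej j)
    simpa [smul_smul] using this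
  have hD_pos : 0 < ‖D‖ := by
    rw [norm_pos_iff]
    intro h
    rw [h] at h2A0
    simp only [Matrix.zero_mul, conjTranspose_zero, add_zero, zero_add] at h2A0
    have hz : Rᴴ * R = 0 := by
      rcases smul_eq_zero.mp h2A0.symm with h' | h'
      · exact absurd h' two_ne_zero
      · exact h'
    have hu : IsUnit (Rᴴ * R) := ((isUnit_conjTranspose R).mpr hR).mul hR
    rw [hz, isUnit_zero_iff] at hu
    have := congrFun (congrFun hu ⟨0, he⟩) ⟨0, he⟩
    simp [one_apply] at this
  refine ⟨(‖R⁻¹‖ ^ 4)⁻¹ * (‖D‖ ^ 2)⁻¹, rfl, by positivity, ?_⟩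
  intro n X hX
  set L : Matrix (Fin d × Fin n) (Fin e × Fin n) ℂ :=
    A0 ⊗ₖ (1 : Matrix (Fin n) (Fin n) ℂ) + ∑ j, A j ⊗ₖ X j with hLdef
  set P : Matrix (Fin e × Fin n) (Fin e × Fin n) ℂ :=
    (D ⊗ₖ (1 : Matrix (Fin n) (Fin n) ℂ)) * L with hPdef
  have hPexp : P = (D * A0) ⊗ₖ (1 : Matrix (Fin n) (Fin n) ℂ) + ∑ j, (D * A j) ⊗ₖ X j := by
    rw [hPdef, hLdef, Matrix.mul_add, Matrix.mul_sum]
    congr 1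
    · rw [← mul_kronecker_mul, one_mul]
    · refine Finset.sum_congr rfl fun j _ => ?_
      rw [← mul_kronecker_mul, one_mul]
  have key : P + Pᴴ = (2 : ℂ) • ((Rᴴ * R) ⊗ₖ (1 : Matrix (Fin n) (Fin n) ℂ)) := by
    rw [hPexp, conjTranspose_add, conjTranspose_sum]
    simp only [kronT, conjTranspose_one]
    have : ∀ j : Fin g, ((D * A j)ᴴ ⊗ₖ (X j)ᴴ) = (D * A j)ᴴ ⊗ₖ X j := fun j => by rw [(hX j).eq]
    calc (D * A0) ⊗ₖ (1 : Matrix (Fin n) (Fin n) ℂ) + (∑ j, (D * A j) ⊗ₖ X j) +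
          ((D * A0)ᴴ ⊗ₖ (1 : Matrix (Fin n) (Fin n) ℂ) + ∑ j, (D * A j)ᴴ ⊗ₖ (X j)ᴴ)
        = (D * A0 + (D * A0)ᴴ) ⊗ₖ (1 : Matrix (Fin n) (Fin n) ℂ) +
            ∑ j, (D * A j + (D * A j)ᴴ) ⊗ₖ X j := by
          simp only [add_kronecker, this, Finset.sum_add_distrib]
          abel
      _ = (2 : ℂ) • ((Rᴴ * R) ⊗ₖ (1 : Matrix (Fin n) (Fin n) ℂ)) := by
          have hz : ∀ j : Fin g, (D * A j + (D * A j)ᴴ) ⊗ₖ X j = 0 := fun j => by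
            rw [h2Aj j, zero_kronecker]
          rw [h2A0, Matrix.smul_kronecker, Finset.sum_eq_zero (fun j _ => hz j), add_zero]
  rw [posSemidef_iff_dotProduct_mulVec]
  constructor
  · refine (posSemidef_conjTranspose_mul_self L).1.sub ?_
    simp [Matrix.IsHermitian, conjTranspose_smul, Complex.star_def]
  · intro v
    rw [sub_mulVec, dotProduct_sub, sub_nonneg]
    have hq : star v ⬝ᵥ ((Lᴴ * L) *ᵥ v) = ((∑ i, ‖(L *ᵥ v) i‖ ^ 2 : ℝ) : ℂ) := by
      rw [← mulVec_mulVec, dotProduct_mulVec, ← star_mulVec, star_dot]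
    have hs : star v ⬝ᵥ ((((‖R⁻¹‖ ^ 4)⁻¹ * (‖D‖ ^ 2)⁻¹ : ℝ) : ℂ) • (1 : Matrix (Fin e × Fin n) (Fin e × Fin n) ℂ)) *ᵥ v
        = ((((‖R⁻¹‖ ^ 4)⁻¹ * (‖D‖ ^ 2)⁻¹) * ∑ i, ‖v i‖ ^ 2 : ℝ) : ℂ) := by
      rw [smul_mulVec, one_mulVec, dotProduct_smul, star_dot, smul_eq_mul,
        ← Complex.ofReal_mul]
    rw [hq, hs, Complex.real_le_real]
    -- real inequality
    set w : Fin e × Fin n → ℂ := (R ⊗ₖ (1 : Matrix (Fin n) (Fin n) ℂ)) *ᵥ v with hwdef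
    set z : ℂ := star v ⬝ᵥ ((D ⊗ₖ (1 : Matrix (Fin n) (Fin n) ℂ)) *ᵥ (L *ᵥ v)) with hzdef
    have hPv : P *ᵥ v = (D ⊗ₖ (1 : Matrix (Fin n) (Fin n) ℂ)) *ᵥ (L *ᵥ v) := by
      rw [hPdef, ← mulVec_mulVec]
    have hconj : star v ⬝ᵥ (Pᴴ *ᵥ v) = (starRingEnd ℂ) z := by
      rw [dotProduct_mulVec, ← star_mulVec, hPv, hzdef]
      rw [dotProduct, dotProduct, map_sum]
      refine Finset.sum_congr rfl fun i _ => ?_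
      simp [mul_comm]
    have hsum : z + (starRingEnd ℂ) z = 2 * ((∑ i, ‖w i‖ ^ 2 : ℝ) : ℂ) := by
      rw [← hconj, hzdef, ← hPv, ← dotProduct_add, ← add_mulVec, key]
      have hfac : (Rᴴ * R) ⊗ₖ (1 : Matrix (Fin n) (Fin n) ℂ)
          = (R ⊗ₖ (1 : Matrix (Fin n) (Fin n) ℂ))ᴴ * (R ⊗ₖ (1 : Matrix (Fin n) (Fin n) ℂ)) := by
        rw [kronT, conjTranspose_one, ← mul_kronecker_mul, one_mul]
      rw [hfac, smul_mulVec, dotProduct_smul, ← mulVec_mulVec, dotProduct_mulVec,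
        ← star_mulVec, ← hwdef, star_dot, smul_eq_mul]
    have hre : z.re = ∑ i, ‖w i‖ ^ 2 := by
      have h := congrArg Complex.re hsum
      rw [Complex.add_re, Complex.conj_re,
        show ((2 : ℂ)) = ((2 : ℝ) : ℂ) by norm_num, ← Complex.ofReal_mul,
        Complex.ofReal_re] at h
      linarith
    -- norms
    have hcs : z.re ≤ ‖(EuclideanSpace.equiv (Fin e × Fin n) ℂ).symm v‖ *
        (‖D‖ * ‖(EuclideanSpace.equiv (Fin d × Fin n) ℂ).symm (L *ᵥ v)‖) := by
      calc z.re ≤ ‖z‖ := Complex.re_le_norm z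
        _ ≤ ‖(EuclideanSpace.equiv (Fin e × Fin n) ℂ).symm v‖ *
            ‖(EuclideanSpace.equiv (Fin e × Fin n) ℂ).symm
              ((D ⊗ₖ (1 : Matrix (Fin n) (Fin n) ℂ)) *ᵥ (L *ᵥ v))‖ := by
            rw [hzdef]; exact abs_star_dot_le _ _
        _ ≤ _ := by
            refine mul_le_mul_of_nonneg_left ?_ (norm_nonneg _)
            exact kron_one_mulVec_norm_le D (L *ᵥ v)
    have hvw : (R⁻¹ ⊗ₖ (1 : Matrix (Fin n) (Fin n) ℂ)) *ᵥ w = v := by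
      rw [hwdef, mulVec_mulVec, ← mul_kronecker_mul, hinv, one_mul, one_kronecker_one, one_mulVec]
    have hvle : ‖(EuclideanSpace.equiv (Fin e × Fin n) ℂ).symm v‖ ≤
        ‖R⁻¹‖ * ‖(EuclideanSpace.equiv (Fin e × Fin n) ℂ).symm w‖ := by
      conv_lhs => rw [← hvw]
      exact kron_one_mulVec_norm_le R⁻¹ w
    set av := ‖(EuclideanSpace.equiv (Fin e × Fin n) ℂ).symm v‖ with hav
    set aw := ‖(EuclideanSpace.equiv (Fin e × Fin n) ℂ).symm w‖ with haw
    set at' := ‖(EuclideanSpace.equiv (Fin d × Fin n) ℂ).symm (L *ᵥ v)‖ with hat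
    have hsumv : ∑ i, ‖v i‖ ^ 2 = av ^ 2 := (enorm_sq _).symm
    have hsumw : ∑ i, ‖w i‖ ^ 2 = aw ^ 2 := (enorm_sq ((EuclideanSpace.equiv (Fin e × Fin n) ℂ).symm w)).symm
    have hsumL : ∑ i, ‖(L *ᵥ v) i‖ ^ 2 = at' ^ 2 := (enorm_sq ((EuclideanSpace.equiv (Fin d × Fin n) ℂ).symm (L *ᵥ v))).symm
    rw [hsumv, hsumL]
    rw [hre, hsumw] at hcs
    have hav0 : 0 ≤ av := norm_nonneg _
    have hat0 : 0 ≤ at' := norm_nonneg _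
    have haw0 : 0 ≤ aw := norm_nonneg _
    rcases eq_or_lt_of_le hav0 with h0 | h0
    · have : av ^ 2 = 0 := by rw [← h0]; ring
      rw [this, mul_zero]
      positivity
    · -- av > 0
      have hx : av * av ≤ (‖R⁻¹‖ * aw) * (‖R⁻¹‖ * aw) :=
        mul_le_mul hvle hvle hav0 (by positivity)
      have step1 : av * av ≤ av * (‖R⁻¹‖ ^ 2 * ‖D‖ * at') := by
        nlinarith [hcs, hx, sq_nonneg ‖R⁻¹‖]
      have step2 : av ≤ ‖R⁻¹‖ ^ 2 * ‖D‖ * at' :=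
        le_of_mul_le_mul_left step1 h0
      have step3 : av ^ 2 ≤ (‖R⁻¹‖ ^ 2 * ‖D‖ * at') ^ 2 := by
        exact pow_le_pow_left₀ hav0 step2 2
      have hc0 : ‖R⁻¹‖ ≠ 0 := hRinv_pos.ne'
      have hd0 : ‖D‖ ≠ 0 := hD_pos.ne'
      calc (‖R⁻¹‖ ^ 4)⁻¹ * (‖D‖ ^ 2)⁻¹ * av ^ 2
          ≤ (‖R⁻¹‖ ^ 4)⁻¹ * (‖D‖ ^ 2)⁻¹ * ((‖R⁻¹‖ ^ 2 * ‖D‖ * at') ^ 2) := by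
            refine mul_le_mul_of_nonneg_left step3 (by positivity)
        _ = ((‖R⁻¹‖ ^ 4)⁻¹ * ‖R⁻¹‖ ^ 4) * ((‖D‖ ^ 2)⁻¹ * ‖D‖ ^ 2) * at' ^ 2 := by ring
        _ = at' ^ 2 := by
            rw [inv_mul_cancel₀ (by positivity), inv_mul_cancel₀ (by positivity), one_mul, one_mul]
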